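/- Suppose n is even and assumptions (A5), (A6), and (D4) hold. Then the generalized n-gene repressilator has at least one steady state in (0,∞)^{2n} (the central steady state E_C exists). -/

import Mathlib

lemma inv_exists {f : ℝ → ℝ} (hc : ContinuousOn f (Set.Ici 0))
    (hm : StrictMonoOn f (Set.Ici 0)) (hf0 : f 0 = 0)
    {X B : ℝ} (hX : 0 ≤ X) (hB : 0 ≤ B) (hBX : B ≤ f X) :
    ∃ φ : ℝ → ℝ, Continuous φ ∧ ∀ c ∈ Set.Icc 0 B, 0 ≤ φ c ∧ φ c ≤ X ∧ f (φ c) = c := by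
  have hfX0 : 0 ≤ f X := le_trans hB hBX
  have hsub : Set.Icc (0:ℝ) X ⊆ Set.Ici 0 := fun x hx => hx.1
  have hcc : ContinuousOn f (Set.Icc 0 X) := hc.mono hsub
  have hmaps : ∀ x : Set.Icc (0:ℝ) X, f x ∈ Set.Icc (0:ℝ) (f X) := by
    rintro ⟨x, hx0, hxX⟩
    constructor
    · have h := hm.monotoneOn (Set.mem_Ici.mpr le_rfl) (Set.mem_Ici.mpr hx0) hx0
      rw [hf0] at h; exact h
    · exact hm.monotoneOn (Set.mem_Ici.mpr hx0) (Set.mem_Ici.mpr hX) hxX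
  set e : Set.Icc (0:ℝ) X → Set.Icc (0:ℝ) (f X) := fun x => ⟨f x, hmaps x⟩ with he
  have hecont : Continuous e := Continuous.subtype_mk hcc.restrict _
  have hinj : Function.Injective e := by
    intro x y h
    have hxy : f x = f y := congrArg Subtype.val h
    exact Subtype.ext (hm.injOn (hsub x.2) (hsub y.2) hxy)
  have hsurj : Function.Surjective e := by
    rintro ⟨y, hy0, hyfX⟩
    have hy : y ∈ Set.Icc (f 0) (f X) := by rw [hf0]; exact ⟨hy0, hyfX⟩
    obtain ⟨x, hx, hfx⟩ := intermediate_value_Icc hX hcc hy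
    exact ⟨⟨x, hx⟩, Subtype.ext hfx⟩
  set E : Set.Icc (0:ℝ) X ≃ Set.Icc (0:ℝ) (f X) := Equiv.ofBijective e ⟨hinj, hsurj⟩ with hE
  have hEcont : Continuous E := hecont
  set homeo := Continuous.homeoOfEquivCompactToT2 (f := E) hEcont with hh
  refine ⟨fun c => (homeo.symm (Set.projIcc 0 (f X) hfX0 c) : ℝ), ?_, ?_⟩
  · exact continuous_subtype_val.comp (homeo.symm.continuous.comp continuous_projIcc)
  · intro c hc
    have hcT : c ∈ Set.Icc (0:ℝ) (f X) := ⟨hc.1, hc.2.trans hBX⟩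
    have hproj : Set.projIcc 0 (f X) hfX0 c = ⟨c, hcT⟩ := Set.projIcc_of_mem _ hcT
    simp only [hproj]
    set x := homeo.symm ⟨c, hcT⟩ with hx
    refine ⟨x.2.1, x.2.2, ?_⟩
    have h1 := homeo.apply_symm_apply ⟨c, hcT⟩
    have h2 : e x = ⟨c, hcT⟩ := h1
    exact congrArg Subtype.val h2

/-- Auxiliary chain recursion. -/
def chainAux (st : ℕ → ℝ → ℝ) (x : ℝ) : ℕ → ℝ
  | 0 => st 0 x
  | m + 1 => st (m + 1) (chainAux st x m)

open Fin.NatCast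


/-- A steady state of the generalized `n`-gene repressilator. -/
def IsSteadyState (n : ℕ) [NeZero n] (a dr dp k : Fin n → ℝ → ℝ)
    (r p : Fin n → ℝ) : Prop :=
  (∀ i, 0 < r i) ∧ (∀ i, 0 < p i) ∧
    (∀ i, dr i (r i) = a i (p (i - 1))) ∧ (∀ i, dp i (p i) = k i (r i))

/-- For `n` even, under the standing assumptions (A1)–(A4) and (D1)–(D3), together
with (A5) (zero leakiness), (A6), and (D4) (nonvanishing derivatives of the
degradation-rate functions at 0), the generalized `n`-gene repressilator has at
least one steady state in `(0,∞)^{2n}` (the central steady state `E_C` exists). -/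
theorem even_exists_steady_state (n : ℕ) [NeZero n] (hn : Even n)
    (a dr dp k : Fin n → ℝ → ℝ)
    (hA1 : ∀ i, ContDiffOn ℝ 1 (a i) (Set.Ici 0))
    (hA2 : ∀ i, ∀ x ≥ (0 : ℝ), 0 ≤ a i x)
    (hA3 : ∀ i, StrictAntiOn (a i) (Set.Ici 0))
    (hA4 : ∀ i, 0 < a i 0)
    (hD1 : ∀ i, ContDiffOn ℝ 1 (dr i) (Set.Ici 0) ∧ ContDiffOn ℝ 1 (dp i) (Set.Ici 0) ∧
      ContDiffOn ℝ 1 (k i) (Set.Ici 0))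
    (hD2 : ∀ i, dr i 0 = 0 ∧ dp i 0 = 0 ∧ k i 0 = 0)
    (hD3 : ∀ i, StrictMonoOn (dr i) (Set.Ici 0) ∧ StrictMonoOn (dp i) (Set.Ici 0) ∧
      StrictMonoOn (k i) (Set.Ici 0))
    -- (A5): zero leakiness
    (hA5 : ∀ i, Filter.Tendsto (a i) Filter.atTop (nhds 0))
    -- `rbar i` is the unique point in `(0,∞)` with `dr i (rbar i) = a i 0`
    (rbar : Fin n → ℝ) (hrbar_pos : ∀ i, 0 < rbar i)
    (hrbar : ∀ i, dr i (rbar i) = a i 0)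
    -- (A6)
    (hA6 : ∀ i, (∃ x ≥ (0 : ℝ), dr i x > a i 0) ∧ (∃ x ≥ (0 : ℝ), dp i x > k i (rbar i)))
    -- (D4)
    (hD4 : ∀ i, derivWithin (dr i) (Set.Ici 0) 0 ≠ 0 ∧ derivWithin (dp i) (Set.Ici 0) 0 ≠ 0) :
    ∃ r p : Fin n → ℝ, IsSteadyState n a dr dp k r p := by
  obtain ⟨n', rfl⟩ : ∃ n', n = n' + 1 :=
    ⟨n - 1, (Nat.succ_pred_eq_of_pos (Nat.pos_of_ne_zero (NeZero.ne n))).symm⟩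
  have ha_cont : ∀ i, ContinuousOn (a i) (Set.Ici 0) := fun i => (hA1 i).continuousOn
  have hk_cont : ∀ i, ContinuousOn (k i) (Set.Ici 0) := fun i => (hD1 i).2.2.continuousOn
  have ha_pos : ∀ i, ∀ x, 0 ≤ x → 0 < a i x := by
    intro i x hx
    rcases lt_or_eq_of_le (hA2 i x hx) with h | h
    · exact h
    · exfalso
      have h1 : a i (x + 1) < a i x :=
        hA3 i (Set.mem_Ici.mpr hx) (Set.mem_Ici.mpr (by linarith)) (by linarith)
      have h2 := hA2 i (x + 1) (by linarith)
      rw [← h] at h1; linarith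
  have ha_le : ∀ i, ∀ x, 0 ≤ x → a i x ≤ a i 0 := by
    intro i x hx
    exact (hA3 i).antitoneOn (Set.mem_Ici.mpr le_rfl) (Set.mem_Ici.mpr hx) hx
  have hk_nonneg : ∀ i, ∀ x, 0 ≤ x → 0 ≤ k i x := by
    intro i x hx
    have h := ((hD3 i).2.2).monotoneOn (Set.mem_Ici.mpr le_rfl) (Set.mem_Ici.mpr hx) hx
    rw [(hD2 i).2.2] at h; exact h
  -- continuous inverses
  have key : ∀ i, ∃ φr φp : ℝ → ℝ, ∃ Y : ℝ, Continuous φr ∧ Continuous φp ∧ 0 ≤ Y ∧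
      (∀ c ∈ Set.Icc 0 (a i 0), 0 ≤ φr c ∧ φr c ≤ rbar i ∧ dr i (φr c) = c) ∧
      (∀ c ∈ Set.Icc 0 (k i (rbar i)), 0 ≤ φp c ∧ φp c ≤ Y ∧ dp i (φp c) = c) := by
    intro i
    obtain ⟨X, hX0, hXgt⟩ := (hA6 i).1
    obtain ⟨Yv, hY0, hYgt⟩ := (hA6 i).2
    obtain ⟨φr, hφrc, hφr⟩ := inv_exists ((hD1 i).1.continuousOn) (hD3 i).1 (hD2 i).1
      hX0 (le_of_lt (hA4 i)) (le_of_lt hXgt)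
    obtain ⟨φp, hφpc, hφp⟩ := inv_exists ((hD1 i).2.1.continuousOn) (hD3 i).2.1 (hD2 i).2.1
      hY0 (hk_nonneg i _ (le_of_lt (hrbar_pos i))) (le_of_lt hYgt)
    refine ⟨φr, φp, Yv, hφrc, hφpc, hY0, ?_, ?_⟩
    · intro c hc
      obtain ⟨h1, _, h3⟩ := hφr c hc
      refine ⟨h1, ?_, h3⟩
      by_contra hgt
      push_neg at hgt
      have := (hD3 i).1 (Set.mem_Ici.mpr (le_of_lt (hrbar_pos i))) (Set.mem_Ici.mpr h1) hgt
      rw [hrbar i, h3] at this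
      exact absurd hc.2 (not_le_of_gt this)
    · intro c hc
      obtain ⟨h1, h2, h3⟩ := hφp c hc
      exact ⟨h1, h2, h3⟩
  choose φr φp Y hφrc hφpc hY0 hr hp' using key
  set stepf : Fin (n' + 1) → ℝ → ℝ := fun i x => φp i (k i (φr i (a i x))) with hstepf
  -- basic facts along a step
  have hamem : ∀ (i : Fin (n' + 1)) (x : ℝ), 0 ≤ x → a i x ∈ Set.Icc 0 (a i 0) :=
    fun i x hx => ⟨hA2 i x hx, ha_le i x hx⟩
  have hrpos : ∀ (i : Fin (n' + 1)) (x : ℝ), 0 ≤ x → 0 < φr i (a i x) := by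
    intro i x hx
    obtain ⟨h1, _, h3⟩ := hr i _ (hamem i x hx)
    rcases lt_or_eq_of_le h1 with h | h
    · exact h
    · exfalso
      rw [← h, (hD2 i).1] at h3
      exact absurd h3.symm (ne_of_gt (ha_pos i x hx))
  have hkmem : ∀ (i : Fin (n' + 1)) (x : ℝ), 0 ≤ x →
      k i (φr i (a i x)) ∈ Set.Icc 0 (k i (rbar i)) := by
    intro i x hx
    obtain ⟨h1, h2, _⟩ := hr i _ (hamem i x hx)
    refine ⟨hk_nonneg i _ h1, ?_⟩
    exact ((hD3 i).2.2).monotoneOn (Set.mem_Ici.mpr h1)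
      (Set.mem_Ici.mpr (le_of_lt (hrbar_pos i))) h2
  have hstep : ∀ (i : Fin (n' + 1)) (x : ℝ), 0 ≤ x → 0 < stepf i x ∧ stepf i x ≤ Y i := by
    intro i x hx
    obtain ⟨h1, h2, h3⟩ := hp' i _ (hkmem i x hx)
    refine ⟨?_, h2⟩
    rcases lt_or_eq_of_le h1 with h | h
    · exact h
    · exfalso
      have hkpos : 0 < k i (φr i (a i x)) := by
        have := (hD3 i).2.2 (Set.mem_Ici.mpr le_rfl)
          (Set.mem_Ici.mpr (le_of_lt (hrpos i x hx))) (hrpos i x hx)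
        rwa [(hD2 i).2.2] at this
      rw [← h, (hD2 i).2.1] at h3
      exact absurd h3.symm (ne_of_gt hkpos)
  have hstep_cont : ∀ i : Fin (n' + 1), ContinuousOn (stepf i) (Set.Ici 0) := by
    intro i
    have h1 : ContinuousOn (fun x => φr i (a i x)) (Set.Ici 0) :=
      (hφrc i).comp_continuousOn (ha_cont i)
    have h2 : ContinuousOn (fun x => k i (φr i (a i x))) (Set.Ici 0) := by
      apply (hk_cont i).comp h1
      intro x hx
      exact Set.mem_Ici.mpr (hr i _ (hamem i x hx)).1
    exact (hφpc i).comp_continuousOn h2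
  set pse : ℝ → ℕ → ℝ := fun x => chainAux (fun m => stepf (m : Fin (n' + 1))) x with hpse
  have hpse_zero : ∀ x, pse x 0 = stepf ((0 : ℕ) : Fin (n' + 1)) x := fun x => rfl
  have hpse_succ : ∀ x m, pse x (m + 1) = stepf (((m + 1 : ℕ)) : Fin (n' + 1)) (pse x m) :=
    fun x m => rfl
  have hpse_pos : ∀ x, 0 ≤ x → ∀ m, 0 < pse x m ∧ pse x m ≤ Y ((m : ℕ) : Fin (n' + 1)) := by
    intro x hx m
    induction m with
    | zero => exact hstep _ x hx
    | succ m ih =>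
      rw [hpse_succ]
      exact hstep _ _ (le_of_lt ih.1)
  have hpse_cont : ∀ m, ContinuousOn (fun x => pse x m) (Set.Ici 0) := by
    intro m
    induction m with
    | zero => exact hstep_cont _
    | succ m ih =>
      apply (hstep_cont _).comp ih
      intro x hx
      exact Set.mem_Ici.mpr (le_of_lt (hpse_pos x hx m).1)
  -- fixed point via IVT
  set M : ℝ := Y ((n' : ℕ) : Fin (n' + 1)) with hM
  have hM0 : 0 ≤ M := hY0 _
  set g : ℝ → ℝ := fun x => pse x n' - x with hg
  have hgc : ContinuousOn g (Set.Icc 0 M) :=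
    ((hpse_cont n').mono (Set.Icc_subset_Ici_self)).sub continuousOn_id
  have hg0 : 0 < g 0 := by
    have := (hpse_pos 0 le_rfl n').1
    simp only [hg]; linarith
  have hgM : g M ≤ 0 := by
    have := (hpse_pos M hM0 n').2
    simp only [hg]; linarith
  have hmem0 : (0 : ℝ) ∈ Set.Icc (g M) (g 0) := ⟨hgM, le_of_lt hg0⟩
  obtain ⟨xs, hxsmem, hgxs⟩ := intermediate_value_Icc' hM0 hgc hmem0
  have hxs0 : 0 ≤ xs := hxsmem.1
  have hF : pse xs n' = xs := by
    have : pse xs n' - xs = 0 := hgxs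
    linarith
  -- build the steady state
  set p : Fin (n' + 1) → ℝ := fun i => pse xs i.val with hpdef
  set r : Fin (n' + 1) → ℝ := fun i => φr i (a i (p (i - 1))) with hrdef
  have hp_pos : ∀ i, 0 < p i := fun i => (hpse_pos xs hxs0 i.val).1
  have hp_nonneg : ∀ i, 0 ≤ p i := fun i => le_of_lt (hp_pos i)
  have hkeyp : ∀ i : Fin (n' + 1), p i = stepf i (p (i - 1)) := by
    intro i
    by_cases h0 : i = 0
    · subst h0
      have hsub1 : ((0 : Fin (n' + 1)) - 1).val = n' := by
        rw [Fin.coe_sub_one]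
        simp
      have h1 : p ((0 : Fin (n' + 1)) - 1) = xs := by
        show pse xs ((0 : Fin (n' + 1)) - 1).val = xs
        rw [hsub1]; exact hF
      show pse xs ((0 : Fin (n' + 1))).val = stepf 0 (p ((0 : Fin (n' + 1)) - 1))
      rw [h1]
      have : ((0 : Fin (n' + 1))).val = 0 := rfl
      rw [this, hpse_zero]
      norm_num
    · have hvne : i.val ≠ 0 := fun h => h0 (Fin.ext h)
      obtain ⟨m, hm⟩ := Nat.exists_eq_succ_of_ne_zero hvne
      have hsub1 : (i - 1).val = m := by
        rw [Fin.coe_sub_one]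
        simp [h0, hm]
      show pse xs i.val = stepf i (pse xs (i - 1).val)
      rw [hsub1, hm, hpse_succ]
      congr 1
      have hmv : (m + 1 : ℕ) = i.val := hm.symm
      rw [hmv, Fin.cast_val_eq_self]
  refine ⟨r, p, ?_, hp_pos, ?_, ?_⟩
  · intro i
    exact hrpos i _ (hp_nonneg (i - 1))
  · intro i
    exact (hr i _ (hamem i _ (hp_nonneg (i - 1)))).2.2
  · intro i
    have h1 : p i = φp i (k i (r i)) := hkeyp i
    rw [h1]
    exact (hp' i _ (hkmem i _ (hp_nonneg (i - 1)))).2.2
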